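/- The inner product of the θ- and φ-derivatives of the UPA steering vector equals ȧ_θ^H ȧ_φ = (N_t(N_h²-1)/12)·π²·sinφ·sinθ·cosφ·cosθ. -/

import Mathlib

lemma sum_range_cast (N : ℕ) : ∑ i ∈ Finset.range N, (i : ℝ) = N * ((N:ℝ) - 1) / 2 := by
  induction N with
  | zero => simp
  | succ n ih => rw [Finset.sum_range_succ, ih]; push_cast; ring

lemma sum_range_sq_cast (N : ℕ) : ∑ i ∈ Finset.range N, (i : ℝ)^2 = N * ((N:ℝ) - 1) * (2*N - 1) / 6 := by
  induction N with
  | zero => simp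
  | succ n ih => rw [Finset.sum_range_succ, ih]; push_cast; ring

lemma sum_u (N : ℕ) : ∑ n : Fin N, (((n:ℝ)+1) - ((N:ℝ)+1)/2) = 0 := by
  rw [Fin.sum_univ_eq_sum_range (fun i => ((i:ℝ)+1) - ((N:ℝ)+1)/2)]
  have h : ∀ i ∈ Finset.range N, ((i:ℝ)+1) - ((N:ℝ)+1)/2
      = (i:ℝ) + (1 - ((N:ℝ)+1)/2) := by intro i _; ring
  rw [Finset.sum_congr rfl h, Finset.sum_add_distrib, Finset.sum_const, Finset.card_range,
    sum_range_cast, nsmul_eq_mul]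
  ring

lemma sum_u_sq (N : ℕ) : ∑ n : Fin N, (((n:ℝ)+1) - ((N:ℝ)+1)/2)^2 = N * ((N:ℝ)^2 - 1) / 12 := by
  rw [Fin.sum_univ_eq_sum_range (fun i => (((i:ℝ)+1) - ((N:ℝ)+1)/2)^2)]
  have h : ∀ i ∈ Finset.range N, (((i:ℝ)+1) - ((N:ℝ)+1)/2)^2
      = (i:ℝ)^2 + (1 - (N:ℝ)) * i + (1 - ((N:ℝ)+1)/2)^2 := by
    intro i _; ring
  rw [Finset.sum_congr rfl h, Finset.sum_add_distrib, Finset.sum_add_distrib,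
    ← Finset.mul_sum, Finset.sum_const, Finset.card_range, sum_range_cast, sum_range_sq_cast,
    nsmul_eq_mul]
  ring

lemma star_unit (A B c d e : ℂ) (hA : star A * A = 1) (hB : star B * B = 1) :
    star (c * A * B) * (d * A * B + A * (e * B)) = star c * (d + e) := by
  simp only [star_mul']
  linear_combination star c * (d + e) * star A * A * hB + star c * (d + e) * hA

lemma star_exp_im (z : ℂ) (hz : star z = -z) :
    star (Complex.exp z) * Complex.exp z = 1 := by
  rw [Complex.star_def, ← Complex.exp_conj, ← Complex.exp_add]
  rw [show (starRingEnd ℂ) z = star z from rfl, hz]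
  simp

/-- ȧ_θ^H ȧ_φ = (N_t(N_h²-1)/12)·π²·sinφ·sinθ·cosφ·cosθ for the UPA steering vector. -/
theorem stmt_8 (Nh Nv : ℕ) (hNh : 1 ≤ Nh) (hNv : 1 ≤ Nv) (θ φ : ℝ)
    (ah dahθ dahφ : Fin Nh → ℂ) (av davφ : Fin Nv → ℂ)
    (hah : ∀ n : Fin Nh, ah n =
      Complex.exp (Complex.I * (Real.pi : ℂ) *
        ((((n : ℝ) + 1) - ((Nh : ℝ) + 1) / 2 : ℝ) : ℂ) *
        ((Real.sin θ : ℝ) : ℂ) * ((Real.sin φ : ℝ) : ℂ)))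
    (hav : ∀ m : Fin Nv, av m =
      Complex.exp (Complex.I * (Real.pi : ℂ) *
        ((((m : ℝ) + 1) - ((Nv : ℝ) + 1) / 2 : ℝ) : ℂ) *
        ((Real.cos φ : ℝ) : ℂ)))
    (hdahθ : ∀ n : Fin Nh, dahθ n =
      Complex.I * (Real.pi : ℂ) *
        ((((n : ℝ) + 1) - ((Nh : ℝ) + 1) / 2 : ℝ) : ℂ) *
        ((Real.cos θ : ℝ) : ℂ) * ((Real.sin φ : ℝ) : ℂ) * ah n)
    (hdahφ : ∀ n : Fin Nh, dahφ n =
      Complex.I * (Real.pi : ℂ) *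
        ((((n : ℝ) + 1) - ((Nh : ℝ) + 1) / 2 : ℝ) : ℂ) *
        ((Real.sin θ : ℝ) : ℂ) * ((Real.cos φ : ℝ) : ℂ) * ah n)
    (hdavφ : ∀ m : Fin Nv, davφ m =
      -(Complex.I * (Real.pi : ℂ) *
        ((((m : ℝ) + 1) - ((Nv : ℝ) + 1) / 2 : ℝ) : ℂ) *
        ((Real.sin φ : ℝ) : ℂ)) * av m)
    (daθ daφ : Fin Nh × Fin Nv → ℂ)
    (hdaθ : ∀ p : Fin Nh × Fin Nv, daθ p = dahθ p.1 * av p.2)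
    (hdaφ : ∀ p : Fin Nh × Fin Nv,
      daφ p = dahφ p.1 * av p.2 + ah p.1 * davφ p.2) :
    ∑ p : Fin Nh × Fin Nv, star (daθ p) * daφ p =
      ((((Nh : ℝ) * (Nv : ℝ) * ((Nh : ℝ) ^ 2 - 1) / 12) * Real.pi ^ 2 *
        Real.sin φ * Real.sin θ * Real.cos φ * Real.cos θ : ℝ) : ℂ) := by
  set u : Fin Nh → ℝ := fun n => ((n:ℝ)+1) - ((Nh:ℝ)+1)/2 with hu
  set v : Fin Nv → ℝ := fun m => ((m:ℝ)+1) - ((Nv:ℝ)+1)/2 with hv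
  have hah1 : ∀ n, star (ah n) * ah n = 1 := by
    intro n; rw [hah n]; apply star_exp_im
    simp only [Complex.star_def, map_mul, Complex.conj_I, Complex.conj_ofReal]
    ring
  have hav1 : ∀ m, star (av m) * av m = 1 := by
    intro m; rw [hav m]; apply star_exp_im
    simp only [Complex.star_def, map_mul, Complex.conj_I, Complex.conj_ofReal]
    ring
  have hterm : ∀ p : Fin Nh × Fin Nv, star (daθ p) * daφ p =
      ((Real.pi^2 * Real.cos θ * Real.sin φ * Real.sin θ * Real.cos φ * (u p.1)^2
        - Real.pi^2 * Real.cos θ * Real.sin φ * Real.sin φ * (u p.1) * (v p.2) : ℝ) : ℂ) := by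
    intro p
    rw [hdaθ p, hdaφ p, hdahθ p.1, hdahφ p.1, hdavφ p.2,
      star_unit (ah p.1) (av p.2) _ _ _ (hah1 p.1) (hav1 p.2)]
    simp only [Complex.star_def, map_mul, Complex.conj_I, Complex.conj_ofReal]
    push_cast
    ring_nf
    simp only [Complex.I_sq]
    push_cast
    simp only [hu, hv]
    push_cast
    ring
  rw [Finset.sum_congr rfl (fun p _ => hterm p), ← Complex.ofReal_sum]
  congr 1
  rw [Fintype.sum_prod_type]
  calc ∑ n : Fin Nh, ∑ m : Fin Nv,
        (Real.pi^2 * Real.cos θ * Real.sin φ * Real.sin θ * Real.cos φ * (u n)^2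
          - Real.pi^2 * Real.cos θ * Real.sin φ * Real.sin φ * (u n) * (v m))
      = ∑ n : Fin Nh, ∑ m : Fin Nv,
        ((Real.pi^2 * Real.cos θ * Real.sin φ * Real.sin θ * Real.cos φ * (u n)^2) * (1:ℝ)
          + (-(Real.pi^2 * Real.cos θ * Real.sin φ * Real.sin φ) * (u n)) * (v m)) := by
        apply Finset.sum_congr rfl; intro n _; apply Finset.sum_congr rfl; intro m _; ring
    _ = (∑ n : Fin Nh, Real.pi^2 * Real.cos θ * Real.sin φ * Real.sin θ * Real.cos φ * (u n)^2)
          * (∑ _m : Fin Nv, (1:ℝ))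
        + (∑ n : Fin Nh, -(Real.pi^2 * Real.cos θ * Real.sin φ * Real.sin φ) * (u n))
          * (∑ m : Fin Nv, v m) := by
        rw [Finset.sum_mul_sum, Finset.sum_mul_sum, ← Finset.sum_add_distrib]
        apply Finset.sum_congr rfl; intro n _; rw [← Finset.sum_add_distrib]
    _ = (Real.pi^2 * Real.cos θ * Real.sin φ * Real.sin θ * Real.cos φ)
          * (Nh * ((Nh:ℝ)^2 - 1) / 12) * Nv
        + (-(Real.pi^2 * Real.cos θ * Real.sin φ * Real.sin φ)) * 0 * (∑ m : Fin Nv, v m) := by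
        rw [← Finset.mul_sum, ← Finset.mul_sum, hu, sum_u_sq, hv, sum_u, Finset.sum_const,
          Finset.card_univ, Fintype.card_fin, nsmul_eq_mul]
        ring
    _ = (Nh:ℝ) * (Nv:ℝ) * ((Nh:ℝ)^2 - 1) / 12 * Real.pi^2
          * Real.sin φ * Real.sin θ * Real.cos φ * Real.cos θ := by ring
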